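/- Let Ω ⊆ ℂ be open, g : ℂ → ℂ holomorphic on Ω, A ⊆ Ω a measurable set, c > 0 a constant with |g′(z)| ≥ c for all z ∈ A, and p ∈ ℕ such that every w ∈ ℂ has at most p preimages under g in A (i.e. #(A ∩ g⁻¹({w})) ≤ p for all w ∈ ℂ). Then μ(A) ≤ (p/c²) · μ(B) for every measurable set B ⊇ g(A), where μ is the Lebesgue measure on ℂ ≅ ℝ². -/

import Mathlib

open MeasureTheory Set
open scoped ENNReal

lemma det_complex_smul_one (a : ℂ) :
    ContinuousLinearMap.det (a • (1 : ℂ →L[ℝ] ℂ)) = Complex.normSq a := by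
  have : ContinuousLinearMap.det (a • (1 : ℂ →L[ℝ] ℂ))
      = LinearMap.det ((a • (1 : ℂ →L[ℝ] ℂ) : ℂ →L[ℝ] ℂ) : ℂ →ₗ[ℝ] ℂ) := rfl
  rw [this, ← LinearMap.det_toMatrix Complex.basisOneI, Matrix.det_fin_two]
  simp [LinearMap.toMatrix_apply, Complex.normSq_apply, Complex.basisOneI]

lemma exists_open_injOn (Ω : Set ℂ) (g : ℂ → ℂ) (hΩ : IsOpen Ω) (hg : DifferentiableOn ℂ g Ω)
    {z : ℂ} (hz : z ∈ Ω) (hd : deriv g z ≠ 0) :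
    ∃ U : Set ℂ, IsOpen U ∧ z ∈ U ∧ U ⊆ Ω ∧ Set.InjOn g U := by
  have ha : AnalyticAt ℂ g z := hg.analyticAt (hΩ.mem_nhds hz)
  obtain ⟨q, hq⟩ := ha
  have hsd0 := hq.hasStrictDerivAt
  have hsd : HasStrictDerivAt g (deriv g z) z := by
    rw [show deriv g z = _ from hsd0.hasDerivAt.deriv]; exact hsd0
  set u : ℂˣ := Units.mk0 _ hd with hu
  set e : ℂ ≃L[ℂ] ℂ := ContinuousLinearEquiv.unitsEquivAut ℂ u with he
  have heq : (e : ℂ →L[ℂ] ℂ) = ContinuousLinearMap.smulRight (1 : ℂ →L[ℂ] ℂ) (deriv g z) := by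
    ext : 1
    simp [he, hu, ContinuousLinearEquiv.unitsEquivAut, mul_comm]
  have hfd : HasStrictFDerivAt g (e : ℂ →L[ℂ] ℂ) z := by
    rw [heq]; exact hsd.hasStrictFDerivAt
  set P := hfd.toOpenPartialHomeomorph g with hP
  refine ⟨P.source ∩ Ω, P.open_source.inter hΩ, ⟨hfd.mem_toOpenPartialHomeomorph_source, hz⟩,
    inter_subset_right, ?_⟩
  have : Set.InjOn P P.source := P.injOn
  rw [hfd.toOpenPartialHomeomorph_coe] at this
  exact this.mono inter_subset_left

theorem measure_le_of_expanding_bounded_degree (Ω : Set ℂ) (g : ℂ → ℂ) (A : Set ℂ)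
    (c : ℝ) (p : ℕ)
    (hΩ : IsOpen Ω) (hg : DifferentiableOn ℂ g Ω)
    (hA : MeasurableSet A) (hAΩ : A ⊆ Ω)
    (hc : 0 < c) (hlow : ∀ z ∈ A, c ≤ ‖deriv g z‖)
    (hp : ∀ w : ℂ, (A ∩ g ⁻¹' {w}).encard ≤ (p : ℕ∞)) :
    ∀ B : Set ℂ, MeasurableSet B → g '' A ⊆ B →
      volume A ≤ ENNReal.ofReal ((p : ℝ) / c ^ 2) * volume B := by
  intro B hB hgAB
  rcases A.eq_empty_or_nonempty with rfl | hAne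
  · simp
  have hder : ∀ z ∈ A, HasDerivAt g (deriv g z) z := fun z hz =>
    (hg.differentiableAt (hΩ.mem_nhds (hAΩ hz))).hasDerivAt
  have hdne : ∀ z ∈ A, deriv g z ≠ 0 := by
    intro z hz h
    have := hlow z hz
    rw [h, norm_zero] at this
    linarith
  have hU : ∀ z ∈ A, ∃ U : Set ℂ, IsOpen U ∧ z ∈ U ∧ U ⊆ Ω ∧ Set.InjOn g U :=
    fun z hz => exists_open_injOn Ω g hΩ hg (hAΩ hz) (hdne z hz)
  choose! U hUopen hUmem hUsub hUinj using hU
  obtain ⟨t, htA, htc, htcov⟩ := TopologicalSpace.countable_cover_nhdsWithin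
    (f := U) (s := A) (fun z hz =>
      mem_nhdsWithin_of_mem_nhds ((hUopen z hz).mem_nhds (hUmem z hz)))
  have htne : t.Nonempty := by
    obtain ⟨z0, hz0⟩ := hAne
    obtain ⟨x, hx, -⟩ := mem_iUnion₂.1 (htcov hz0)
    exact ⟨x, hx⟩
  obtain ⟨e, rfl⟩ := htc.exists_eq_range htne
  have heA : ∀ n, e n ∈ A := fun n => htA ⟨n, rfl⟩
  set V : ℕ → Set ℂ := fun n => U (e n) with hV
  set S : ℕ → Set ℂ := fun n => A ∩ disjointed V n with hS
  have hSsubV : ∀ n, S n ⊆ V n := fun n =>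
    (Set.inter_subset_right).trans (disjointed_subset V n)
  have hSsubA : ∀ n, S n ⊆ A := fun n => Set.inter_subset_left
  have hSmeas : ∀ n, MeasurableSet (S n) := fun n =>
    hA.inter (MeasurableSet.disjointed (fun i => (hUopen (e i) (heA i)).measurableSet) n)
  have hSdisj : Pairwise (Function.onFun Disjoint S) := fun m n hmn =>
    (disjoint_disjointed V hmn).mono Set.inter_subset_right Set.inter_subset_right
  have hScover : A = ⋃ n, S n := by
    have h1 : A ⊆ ⋃ n, V n := by
      intro z hz
      obtain ⟨x, hx, hzx⟩ := mem_iUnion₂.1 (htcov hz)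
      obtain ⟨n, rfl⟩ := hx
      exact mem_iUnion.2 ⟨n, hzx⟩
    rw [hS]
    rw [← Set.inter_iUnion, iUnion_disjointed, Set.inter_eq_self_of_subset_left h1]
  have hSinj : ∀ n, Set.InjOn g (S n) := fun n =>
    (hUinj (e n) (heA n)).mono (hSsubV n)
  -- measurability of the integrand
  have hmeasInt : Measurable fun z => ENNReal.ofReal (Complex.normSq (deriv g z)) :=
    (Complex.continuous_normSq.measurable.comp (measurable_deriv g)).ennreal_ofReal
  -- key inequality
  have key : ∀ n, ENNReal.ofReal (c ^ 2) * volume (S n) ≤ volume (g '' S n) := by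
    intro n
    have hfd : ∀ z ∈ S n, HasFDerivWithinAt g ((deriv g z) • (1 : ℂ →L[ℝ] ℂ)) (S n) z :=
      fun z hz => ((hder z (hSsubA n hz)).complexToReal_fderiv).hasFDerivWithinAt
    have h1 := lintegral_abs_det_fderiv_le_addHaar_image volume (hSmeas n) hfd (hSinj n)
    refine le_trans ?_ h1
    have h2 : ∀ z : ℂ, ENNReal.ofReal |((deriv g z) • (1 : ℂ →L[ℝ] ℂ)).det|
        = ENNReal.ofReal (Complex.normSq (deriv g z)) := by
      intro z
      rw [det_complex_smul_one, abs_of_nonneg (Complex.normSq_nonneg _)]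
    calc ENNReal.ofReal (c ^ 2) * volume (S n)
        = ∫⁻ _ in S n, ENNReal.ofReal (c ^ 2) ∂volume := (setLIntegral_const _ _).symm
      _ ≤ ∫⁻ z in S n, ENNReal.ofReal (Complex.normSq (deriv g z)) ∂volume := by
          refine setLIntegral_mono hmeasInt (fun z hz => ?_)
          refine ENNReal.ofReal_le_ofReal ?_
          have := hlow z (hSsubA n hz)
          calc c ^ 2 ≤ ‖deriv g z‖ ^ 2 := by
                have := hlow z (hSsubA n hz)
                nlinarith [norm_nonneg (deriv g z)]
            _ = Complex.normSq (deriv g z) := by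
                rw [Complex.normSq_eq_norm_sq]
      _ = ∫⁻ z in S n, ENNReal.ofReal |((deriv g z) • (1 : ℂ →L[ℝ] ℂ)).det| ∂volume := by
          simp_rw [h2]
  -- measurability of images
  have hTmeas : ∀ n, MeasurableSet (g '' S n) := fun n =>
    (hSmeas n).image_of_continuousOn_injOn
      (hg.continuousOn.mono ((hSsubA n).trans hAΩ)) (hSinj n)
  -- multiplicity bound
  have hsum : (∑' n, volume (g '' S n)) ≤ (p : ℝ≥0∞) * volume B := by
    have hpt : ∀ w : ℂ, (∑' n, (g '' S n).indicator (fun _ => (1 : ℝ≥0∞)) w)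
        ≤ B.indicator (fun _ => (p : ℝ≥0∞)) w := by
      intro w
      by_cases hw : ∃ n, w ∈ g '' S n
      · obtain ⟨n0, hn0⟩ := hw
        have hwB : w ∈ B := hgAB (Set.image_mono (hSsubA n0) hn0)
        set J : Set ℕ := {n | w ∈ g '' S n} with hJ
        have hmap : ∀ n ∈ J, ∃ z, z ∈ S n ∧ g z = w := fun n hn => hn
        choose! zz hzz1 hzz2 using hmap
        have hJenc : J.encard ≤ (p : ℕ∞) := by
          refine le_trans (Set.encard_le_encard_of_injOn (f := zz) ?_ ?_) (hp w)
          · intro n hn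
            exact ⟨hSsubA n (hzz1 n hn), hzz2 n hn⟩
          · intro m hm n hn hzmn
            by_contra hmn
            exact (hSdisj hmn).le_bot ⟨hzz1 m hm, hzmn ▸ hzz1 n hn⟩
        have hJfin : J.Finite := by
          rw [← Set.encard_ne_top_iff]
          exact fun h => by simp [h] at hJenc
        have hcard : (hJfin.toFinset.card : ℕ∞) ≤ (p : ℕ∞) := by
          rwa [← Set.Finite.encard_eq_coe_toFinset_card hJfin]
        have hcard' : hJfin.toFinset.card ≤ p := by exact_mod_cast hcard
        have hind : ∀ n, (g '' S n).indicator (fun _ => (1 : ℝ≥0∞)) w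
            = J.indicator (fun _ => (1 : ℝ≥0∞)) n := by
          intro n
          by_cases h : w ∈ g '' S n
          · rw [Set.indicator_of_mem h, Set.indicator_of_mem (show n ∈ J from h)]
          · rw [Set.indicator_of_notMem h, Set.indicator_of_notMem (show n ∉ J from h)]
        calc (∑' n, (g '' S n).indicator (fun _ => (1 : ℝ≥0∞)) w)
            = ∑' n, J.indicator (fun _ => (1 : ℝ≥0∞)) n := by simp_rw [hind]
          _ = ∑ n ∈ hJfin.toFinset, J.indicator (fun _ => (1 : ℝ≥0∞)) n := by
              refine tsum_eq_sum (fun n hn => ?_)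
              exact Set.indicator_of_notMem (fun h => hn (hJfin.mem_toFinset.2 h)) _
          _ ≤ ∑ _n ∈ hJfin.toFinset, (1 : ℝ≥0∞) :=
              Finset.sum_le_sum (fun n _ => Set.indicator_le_self _ _ n)
          _ = (hJfin.toFinset.card : ℝ≥0∞) := by simp
          _ ≤ (p : ℝ≥0∞) := by exact_mod_cast hcard'
          _ = B.indicator (fun _ => (p : ℝ≥0∞)) w := by rw [Set.indicator_of_mem hwB]
      · push_neg at hw
        simp [Set.indicator_of_notMem (hw _)]
    calc (∑' n, volume (g '' S n))
        = ∑' n, ∫⁻ w, (g '' S n).indicator (fun _ => (1 : ℝ≥0∞)) w := by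
          refine tsum_congr fun n => ?_
          rw [lintegral_indicator_const (hTmeas n), one_mul]
      _ = ∫⁻ w, ∑' n, (g '' S n).indicator (fun _ => (1 : ℝ≥0∞)) w := by
          exact (lintegral_tsum (fun n =>
            ((measurable_const.indicator (hTmeas n)).aemeasurable))).symm
      _ ≤ ∫⁻ w, B.indicator (fun _ => (p : ℝ≥0∞)) w := lintegral_mono hpt
      _ = (p : ℝ≥0∞) * volume B := lintegral_indicator_const hB _
  -- combine
  have hc2 : (0 : ℝ) < c ^ 2 := by positivity
  set a := ENNReal.ofReal (c ^ 2) with ha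
  have ha0 : a ≠ 0 := by
    simp only [ha, ne_eq, ENNReal.ofReal_eq_zero, not_le]
    exact hc2
  have hatop : a ≠ ⊤ := ENNReal.ofReal_ne_top
  calc volume A = ∑' n, volume (S n) := by
        rw [hScover]
        exact measure_iUnion hSdisj hSmeas
    _ ≤ ∑' n, a⁻¹ * volume (g '' S n) := by
        refine ENNReal.tsum_le_tsum (fun n => ?_)
        calc volume (S n) = a⁻¹ * (a * volume (S n)) := by
              rw [← mul_assoc, ENNReal.inv_mul_cancel ha0 hatop, one_mul]
          _ ≤ a⁻¹ * volume (g '' S n) := by gcongr; exact key n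
    _ = a⁻¹ * ∑' n, volume (g '' S n) := ENNReal.tsum_mul_left
    _ ≤ a⁻¹ * ((p : ℝ≥0∞) * volume B) := by gcongr
    _ = ENNReal.ofReal ((p : ℝ) / c ^ 2) * volume B := by
        rw [ENNReal.ofReal_div_of_pos hc2, ENNReal.ofReal_natCast, ← ha,
          div_eq_mul_inv]
        ring
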